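/- The output of a deep ReLU network equals the sum over all paths of the product of: the input coordinate at the path's starting node, the product of gating values along the path, and the product of weights along the path. Equivalently, ŷ_Θ(x) = ⟨φ_{x,Θ}, v_Θ⟩, the inner product of the neural path feature and the neural path value. -/
import Mathlib

theorem dnn_aux {din w D : ℕ}
    (x : Fin din → ℝ) (Win : Fin w → Fin din → ℝ)
    (Wmid : ℕ → Fin w → Fin w → ℝ) (q G : ℕ → Fin w → ℝ)
    (hq1 : ∀ i, q 1 i = ∑ j, Win i j * x j)
    (hqs : ∀ l, 1 ≤ l → l + 1 ≤ D → ∀ i, q (l+1) i = ∑ j, Wmid l i j * (q l j * G l j)) :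
    ∀ k, k + 1 ≤ D → ∀ i : Fin w, q (k+1) i * G (k+1) i
      = ∑ p : Fin din × (Fin k → Fin w),
          x p.1 * Win ((Fin.snoc p.2 i : Fin (k+1) → Fin w) 0) p.1 *
          (∏ l : Fin k, Wmid ((l:ℕ)+1) ((Fin.snoc p.2 i : Fin (k+1) → Fin w) l.succ)
            ((Fin.snoc p.2 i : Fin (k+1) → Fin w) l.castSucc)) *
          ∏ l : Fin (k+1), G ((l:ℕ)+1) ((Fin.snoc p.2 i : Fin (k+1) → Fin w) l) := by
  intro k
  induction k with
  | zero =>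
    intro _ i
    rw [hq1, Fintype.sum_prod_type]
    simp only [Finset.univ_unique, Finset.sum_singleton, Fin.prod_univ_zero, mul_one,
      Fin.prod_univ_one]
    have h0 : ∀ (f : Fin 0 → Fin w), (Fin.snoc f i : Fin 1 → Fin w) 0 = i := by
      intro f; exact Fin.snoc_zero f i ▸ rfl
    rw [Finset.sum_mul]
    refine Finset.sum_congr rfl fun j _ => ?_
    simp only [Fin.prod_univ_succ, Fin.prod_univ_zero, mul_one, h0, Fin.val_zero]
    ring
  | succ k ih =>
    intro hk i
    have hih : ∀ m, q (k+1) m * G (k+1) m = _ := fun m => ih (by omega) m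
    rw [hqs (k+1) (by omega) (by omega) i]
    simp only [hih]
    rw [Finset.sum_mul]
    simp only [Finset.mul_sum, Finset.sum_mul]
    conv_rhs => rw [← Equiv.sum_comp
      (⟨fun z => (z.2.1, Fin.snoc z.2.2 z.1),
        fun p => (p.2 (Fin.last k), (p.1, Fin.init p.2)),
        fun z => by simp [Fin.init_snoc],
        fun p => by simp [Fin.snoc_init_self]⟩ :
        Fin w × (Fin din × (Fin k → Fin w)) ≃ Fin din × (Fin (k+1) → Fin w)),
      Fintype.sum_prod_type]
    refine Finset.sum_congr rfl fun m _ => Finset.sum_congr rfl fun p _ => ?_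
    obtain ⟨j, f⟩ := p
    simp only [Equiv.coe_fn_mk]
    have h0 : (Fin.snoc (Fin.snoc f m) i : Fin (k+2) → Fin w) 0 = (Fin.snoc f m : Fin (k+1) → Fin w) 0 := by
      have : (0 : Fin (k+2)) = Fin.castSucc 0 := rfl
      rw [this, Fin.snoc_castSucc]
    conv_rhs => rw [Fin.prod_univ_castSucc, Fin.prod_univ_castSucc]
    simp only [Fin.succ_castSucc, Fin.snoc_castSucc, Fin.succ_last, Fin.snoc_last,
      Fin.coe_castSucc, Fin.val_last, h0]
    ring


/-- The output of a deep ReLU network equals the sum over all paths of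
(input coordinate at the path's start) × (product of gates on the path) ×
(product of weights on the path), i.e. ŷ = ⟨φ_{x,Θ}, v_Θ⟩.
Here `D` is the number of hidden layers (depth d = D + 1 weight layers),
`Win`, `Wmid l`, `Wout` are the weights of the input, intermediate and output layers,
`q l i` is the pre-activation of unit `i` of hidden layer `l ∈ {1,…,D}`, and
`G l i` the corresponding ReLU gate.  A path is a pair of an input node and a choice
of one hidden unit per hidden layer. -/
theorem dnn_output_eq_npf_npv_inner (din w D : ℕ) (hD : 0 < D)
    (x : Fin din → ℝ)
    (Win : Fin w → Fin din → ℝ)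
    (Wmid : ℕ → Fin w → Fin w → ℝ)
    (Wout : Fin w → ℝ)
    (q G : ℕ → Fin w → ℝ)
    (hq1 : ∀ i, q 1 i = ∑ j, Win i j * x j)
    (hqs : ∀ l, 1 ≤ l → l + 1 ≤ D → ∀ i, q (l+1) i = ∑ j, Wmid l i j * (q l j * G l j))
    (hG : ∀ l i, G l i = if 0 < q l i then (1:ℝ) else 0)
    (yhat : ℝ)
    (hy : yhat = ∑ j, Wout j * (q D j * G D j)) :
    yhat = ∑ p : Fin din × (Fin D → Fin w),
      (x p.1 * ∏ l ∈ Finset.range D, G (l+1) (p.2 ⟨l % D, Nat.mod_lt l hD⟩)) *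
      (Win (p.2 ⟨0 % D, Nat.mod_lt 0 hD⟩) p.1 *
        (∏ l ∈ Finset.range (D-1),
          Wmid (l+1) (p.2 ⟨(l+1) % D, Nat.mod_lt _ hD⟩) (p.2 ⟨l % D, Nat.mod_lt l hD⟩)) *
        Wout (p.2 ⟨(D-1) % D, Nat.mod_lt _ hD⟩)) := by
  obtain ⟨k, rfl⟩ : ∃ k, D = k + 1 := ⟨D - 1, by omega⟩
  have haux := dnn_aux x Win Wmid q G hq1 hqs k le_rfl
  rw [hy]
  simp only [haux, Finset.mul_sum]
  conv_rhs => rw [← Equiv.sum_comp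
      (⟨fun z => (z.2.1, Fin.snoc z.2.2 z.1),
        fun p => (p.2 (Fin.last k), (p.1, Fin.init p.2)),
        fun z => by simp [Fin.init_snoc],
        fun p => by simp [Fin.snoc_init_self]⟩ :
        Fin w × (Fin din × (Fin k → Fin w)) ≃ Fin din × (Fin (k+1) → Fin w)),
      Fintype.sum_prod_type]
  refine Finset.sum_congr rfl fun m _ => Finset.sum_congr rfl fun p _ => ?_
  obtain ⟨j, f⟩ := p
  simp only [Equiv.coe_fn_mk]
  have hmk : ∀ (i : Fin (k+1)) (h : (i:ℕ) % (k+1) < k+1),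
      (⟨(i:ℕ) % (k+1), h⟩ : Fin (k+1)) = i :=
    fun i h => Fin.ext (Nat.mod_eq_of_lt i.isLt)
  have hsucc : ∀ (i : Fin k) (h : ((i:ℕ)+1) % (k+1) < k+1),
      (⟨((i:ℕ)+1) % (k+1), h⟩ : Fin (k+1)) = i.succ :=
    fun i h => Fin.ext (by simp [Nat.mod_eq_of_lt (by omega : (i:ℕ)+1 < k+1)])
  have hcast : ∀ (i : Fin k) (h : (i:ℕ) % (k+1) < k+1),
      (⟨(i:ℕ) % (k+1), h⟩ : Fin (k+1)) = i.castSucc :=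
    fun i h => Fin.ext (by simp [Nat.mod_eq_of_lt (by omega : (i:ℕ) < k+1)])
  have h0 : ∀ (h : 0 % (k+1) < k+1), (⟨0 % (k+1), h⟩ : Fin (k+1)) = 0 :=
    fun h => Fin.ext (by simp)
  have hlast : ∀ (h : k % (k+1) < k+1),
      (⟨k % (k+1), h⟩ : Fin (k+1)) = Fin.last k :=
    fun h => Fin.ext (by simp [Nat.mod_eq_of_lt (by omega : k < k+1)])
  simp only [Nat.add_sub_cancel]
  rw [← Fin.prod_univ_eq_prod_range
      (fun l => G (l+1) ((Fin.snoc f m : Fin (k+1) → Fin w) ⟨l % (k+1), Nat.mod_lt l (by omega)⟩)),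
    ← Fin.prod_univ_eq_prod_range
      (fun l => Wmid (l+1) ((Fin.snoc f m : Fin (k+1) → Fin w) ⟨(l+1) % (k+1), Nat.mod_lt _ (by omega)⟩)
        ((Fin.snoc f m : Fin (k+1) → Fin w) ⟨l % (k+1), Nat.mod_lt l (by omega)⟩))]
  simp only [hmk, hsucc, hcast, h0, hlast, Fin.snoc_last]
  ring
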